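/- Let W̃_G = X ⋊ S_n^* where n = 2m+1, X = {(x_1,...,x_n) ∈ ℤ^n : x_1+x_n = ... = x_m+x_{m+2} = 2x_{m+1}}, and S_n^* = {σ ∈ S_n : σ(n+1-j) = n+1-σ(j)}. Then the map (x_1,...,x_n) ↦ (x_1,...,x_m,x_{m+2},...,x_n) on translation parts (deleting the middle coordinate), together with the natural isomorphism S_n^* ≅ S_{2m}^* (restriction of a *-symmetric permutation of {1,...,n} to {1,...,n}\{m+1}), defines an injective group homomorphism W̃_G → W̃_{GSp} := X' ⋊ S_{2m}^*, where X' = {(y_1,...,y_{2m}) ∈ ℤ^{2m} : y_1+y_{2m} = ... = y_m+y_{m+1}}, whose image has index 2. -/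

import Mathlib

/-- An "affine pair" (v, σ): the affine transformation p ↦ v + σ·p of ℤ^k, where
(σ·p)(t) = p(σ⁻¹ t).  These form a group, the semidirect product ℤ^k ⋊ S_k. -/
@[ext]
structure AffPair (k : ℕ) where
  v : Fin k → ℤ
  p : Equiv.Perm (Fin k)

namespace AffPair

variable {k : ℕ}

instance : Group (AffPair k) where
  mul g h := ⟨g.v + fun t => h.v (g.p⁻¹ t), g.p * h.p⟩
  one := ⟨0, 1⟩
  inv g := ⟨fun t => -(g.v (g.p t)), g.p⁻¹⟩
  mul_assoc a b c := by
    refine AffPair.ext ?_ (mul_assoc ..)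
    funext t
    show (a.v t + b.v (a.p⁻¹ t)) + c.v ((a.p * b.p)⁻¹ t)
        = a.v t + (b.v (a.p⁻¹ t) + c.v (b.p⁻¹ (a.p⁻¹ t)))
    simp [mul_inv_rev, add_assoc]
  one_mul a := by
    refine AffPair.ext ?_ (one_mul ..)
    funext t
    show 0 + a.v t = a.v t
    simp
  mul_one a := by
    refine AffPair.ext ?_ (mul_one ..)
    funext t
    show a.v t + (0 : Fin k → ℤ) (a.p⁻¹ t) = a.v t
    simp
  inv_mul_cancel a := by
    refine AffPair.ext ?_ (inv_mul_cancel ..)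
    funext t
    show -(a.v (a.p t)) + a.v ((a.p⁻¹)⁻¹ t) = (0 : Fin k → ℤ) t
    simp

lemma mul_v (g h : AffPair k) : (g * h).v = g.v + fun t => h.v (g.p⁻¹ t) := rfl
lemma mul_p (g h : AffPair k) : (g * h).p = g.p * h.p := rfl
lemma one_v : (1 : AffPair k).v = 0 := rfl
lemma one_p : (1 : AffPair k).p = 1 := rfl
lemma inv_v (g : AffPair k) : g⁻¹.v = fun t => -(g.v (g.p t)) := rfl
lemma inv_p (g : AffPair k) : g⁻¹.p = g.p⁻¹ := rfl

end AffPair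

/-- A permutation is ∗-symmetric if it commutes with j ↦ rev j (i.e. j ↦ N+1-j). -/
def IsStarPerm {N : ℕ} (σ : Equiv.Perm (Fin N)) : Prop :=
  ∀ j : Fin N, σ j.rev = (σ j).rev

lemma isStarPerm_inv {N : ℕ} {σ : Equiv.Perm (Fin N)} (h : IsStarPerm σ) :
    IsStarPerm σ⁻¹ := by
  intro j
  apply σ.injective
  rw [h (σ⁻¹ j)]; simp only [Equiv.Perm.coe_inv, Equiv.apply_symm_apply]

lemma isStarPerm_mul {N : ℕ} {σ τ : Equiv.Perm (Fin N)} (hσ : IsStarPerm σ)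
    (hτ : IsStarPerm τ) : IsStarPerm (σ * τ) := by
  intro j
  simp [Equiv.Perm.mul_apply, hτ j, hσ (τ j)]

/-- The middle index m of Fin (2m+1) (i.e. m+1 in 1-indexed notation). -/
def midIdx (m : ℕ) : Fin (2*m+1) := ⟨m, by omega⟩

lemma rev_midIdx (m : ℕ) : (midIdx m).rev = midIdx m := by
  ext
  simp [midIdx, Fin.rev]
  omega

lemma starPerm_fixes_mid {m : ℕ} {σ : Equiv.Perm (Fin (2*m+1))} (h : IsStarPerm σ) :
    σ (midIdx m) = midIdx m := by
  have h1 := h (midIdx m)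
  rw [rev_midIdx] at h1
  have h2 : (σ (midIdx m)).rev = σ (midIdx m) := h1.symm
  have h3 : ((σ (midIdx m)).rev).val = (σ (midIdx m)).val := congrArg Fin.val h2
  have h4 : (σ (midIdx m)).val < 2*m+1 := (σ (midIdx m)).isLt
  rw [Fin.val_rev] at h3
  ext
  show (σ (midIdx m)).val = m
  omega

/-- The Iwahori–Weyl group W̃_G = X ⋊ S_n^*, n = 2m+1, realized inside the group of
affine transformations of ℤ^n: translation parts lie in
X = {x : x_1 + x_n = … = x_m + x_{m+2} = 2x_{m+1}} and linear parts in S_n^*. -/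
def WtildeG (m : ℕ) : Subgroup (AffPair (2*m+1)) where
  carrier := {g | (∀ j : Fin (2*m+1), g.v j + g.v j.rev = 2 * g.v (midIdx m)) ∧
    IsStarPerm g.p}
  one_mem' := by
    constructor
    · intro j; simp [AffPair.one_v]
    · intro j; simp [AffPair.one_p]
  mul_mem' := by
    rintro g h ⟨hgv, hgp⟩ ⟨hhv, hhp⟩
    constructor
    · intro j
      have hinv : IsStarPerm g.p⁻¹ := isStarPerm_inv hgp
      have hmid : g.p⁻¹ (midIdx m) = midIdx m := starPerm_fixes_mid hinv
      simp only [AffPair.mul_v, Pi.add_apply]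
      rw [hinv j, hmid]
      have := hhv (g.p⁻¹ j)
      have := hgv j
      ring_nf
      omega
    · exact isStarPerm_mul hgp hhp
  inv_mem' := by
    rintro g ⟨hgv, hgp⟩
    constructor
    · intro j
      have hmid : g.p (midIdx m) = midIdx m := starPerm_fixes_mid hgp
      simp only [AffPair.inv_v, AffPair.inv_p]
      rw [hgp j, hmid]
      have := hgv (g.p j)
      omega
    · exact isStarPerm_inv hgp
  
/-- The Iwahori–Weyl group W̃_{GSp} = X' ⋊ S_{2m}^* of GSp_{2m}, realized inside the
group of affine transformations of ℤ^{2m}: translation parts lie in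
X' = {y : y_1 + y_{2m} = … = y_m + y_{m+1}} and linear parts in S_{2m}^*. -/
def WtildeGSp (m : ℕ) : Subgroup (AffPair (2*m)) where
  carrier := {g | (∀ j l : Fin (2*m), g.v j + g.v j.rev = g.v l + g.v l.rev) ∧
    IsStarPerm g.p}
  one_mem' := by
    constructor
    · intro j l; simp [AffPair.one_v]
    · intro j; simp [AffPair.one_p]
  mul_mem' := by
    rintro g h ⟨hgv, hgp⟩ ⟨hhv, hhp⟩
    constructor
    · intro j l
      have hinv : IsStarPerm g.p⁻¹ := isStarPerm_inv hgp
      simp only [AffPair.mul_v, Pi.add_apply]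
      rw [hinv j, hinv l]
      have h1 := hhv (g.p⁻¹ j) (g.p⁻¹ l)
      have h2 := hgv j l
      omega
    · exact isStarPerm_mul hgp hhp
  inv_mem' := by
    rintro g ⟨hgv, hgp⟩
    constructor
    · intro j l
      simp only [AffPair.inv_v, AffPair.inv_p]
      rw [hgp j, hgp l]
      have := hgv (g.p j) (g.p l)
      omega
    · exact isStarPerm_inv hgp

/-- The embedding Fin (2m) → Fin (2m+1) skipping the middle index m
(deleting the middle coordinate). -/
def iotaIdx (m : ℕ) (t : Fin (2*m)) : Fin (2*m+1) :=
  ⟨if (t : ℕ) < m then (t : ℕ) else (t : ℕ) + 1, by have := t.isLt; split <;> omega⟩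

section Aux

variable {m : ℕ}

/-- Inverse of `iotaIdx` away from the middle index. -/
def deIota (hm : 0 < m) (j : Fin (2*m+1)) : Fin (2*m) :=
  ⟨if (j : ℕ) < m then (j : ℕ) else (j : ℕ) - 1, by have := j.isLt; split <;> omega⟩

lemma deIota_iota (hm : 0 < m) (t : Fin (2*m)) : deIota hm (iotaIdx m t) = t := by
  have := t.isLt
  ext
  simp only [deIota, iotaIdx]
  split_ifs <;> omega

lemma iotaIdx_injective : Function.Injective (iotaIdx m) := by
  rcases Nat.eq_zero_or_pos m with h | h
  · subst h; intro a b _; exact a.elim0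
  · exact Function.LeftInverse.injective (deIota_iota h)

lemma iota_ne_mid (t : Fin (2*m)) : iotaIdx m t ≠ midIdx m := by
  have := t.isLt
  intro h
  have := congrArg Fin.val h
  simp only [iotaIdx, midIdx] at this
  split_ifs at this <;> omega

lemma iota_deIota (hm : 0 < m) {j : Fin (2*m+1)} (hj : j ≠ midIdx m) :
    iotaIdx m (deIota hm j) = j := by
  have hv : (j : ℕ) ≠ m := fun h => hj (by ext; exact h)
  have := j.isLt
  ext
  simp only [deIota, iotaIdx]
  split_ifs <;> omega

lemma iotaIdx_rev (t : Fin (2*m)) : iotaIdx m t.rev = (iotaIdx m t).rev := by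
  have := t.isLt
  ext
  simp only [iotaIdx, Fin.val_rev]
  split_ifs <;> omega

/-- Restriction of a permutation fixing the middle index to `Fin (2*m)`. -/
def restrictPerm (hm : 0 < m) (σ : Equiv.Perm (Fin (2*m+1)))
    (hσ : σ (midIdx m) = midIdx m) : Equiv.Perm (Fin (2*m)) where
  toFun t := deIota hm (σ (iotaIdx m t))
  invFun t := deIota hm (σ⁻¹ (iotaIdx m t))
  left_inv t := by
    have h1 : σ (iotaIdx m t) ≠ midIdx m := by
      intro h
      exact iota_ne_mid t (σ.injective (h.trans hσ.symm))
    show deIota hm (σ⁻¹ (iotaIdx m (deIota hm (σ (iotaIdx m t))))) = t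
    rw [iota_deIota hm h1, Equiv.Perm.coe_inv, Equiv.symm_apply_apply, deIota_iota]
  right_inv t := by
    have hσ' : σ⁻¹ (midIdx m) = midIdx m :=
      σ.injective (by rw [Equiv.Perm.coe_inv, Equiv.apply_symm_apply, hσ])
    have h1 : σ⁻¹ (iotaIdx m t) ≠ midIdx m := by
      intro h
      exact iota_ne_mid t (σ⁻¹.injective (h.trans hσ'.symm))
    show deIota hm (σ (iotaIdx m (deIota hm (σ⁻¹ (iotaIdx m t))))) = t
    rw [iota_deIota hm h1, Equiv.Perm.coe_inv, Equiv.apply_symm_apply, deIota_iota]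

lemma iota_restrict (hm : 0 < m) (σ : Equiv.Perm (Fin (2*m+1)))
    (hσ : σ (midIdx m) = midIdx m) (t : Fin (2*m)) :
    iotaIdx m (restrictPerm hm σ hσ t) = σ (iotaIdx m t) := by
  have h1 : σ (iotaIdx m t) ≠ midIdx m := by
    intro h
    exact iota_ne_mid t (σ.injective (h.trans hσ.symm))
  exact iota_deIota hm h1

lemma iota_restrict_inv (hm : 0 < m) (σ : Equiv.Perm (Fin (2*m+1)))
    (hσ : σ (midIdx m) = midIdx m) (t : Fin (2*m)) :
    iotaIdx m ((restrictPerm hm σ hσ)⁻¹ t) = σ⁻¹ (iotaIdx m t) := by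
  have hσ' : σ⁻¹ (midIdx m) = midIdx m :=
    σ.injective (by rw [Equiv.Perm.coe_inv, Equiv.apply_symm_apply, hσ])
  have h1 : σ⁻¹ (iotaIdx m t) ≠ midIdx m := by
    intro h
    exact iota_ne_mid t (σ⁻¹.injective (h.trans hσ'.symm))
  exact iota_deIota hm h1

/-- Lift of a permutation of `Fin (2*m)` to `Fin (2*m+1)` fixing the middle index. -/
def liftPerm (hm : 0 < m) (τ : Equiv.Perm (Fin (2*m))) : Equiv.Perm (Fin (2*m+1)) where
  toFun j := if j = midIdx m then midIdx m else iotaIdx m (τ (deIota hm j))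
  invFun j := if j = midIdx m then midIdx m else iotaIdx m (τ⁻¹ (deIota hm j))
  left_inv j := by
    by_cases h : j = midIdx m
    · simp [h]
    · beta_reduce
      rw [if_neg h, if_neg (iota_ne_mid _), deIota_iota, Equiv.Perm.coe_inv, Equiv.symm_apply_apply,
        iota_deIota hm h]
  right_inv j := by
    by_cases h : j = midIdx m
    · simp [h]
    · beta_reduce
      rw [if_neg h, if_neg (iota_ne_mid _), deIota_iota, Equiv.Perm.coe_inv, Equiv.apply_symm_apply,
        iota_deIota hm h]

end Aux

section Main

variable {m : ℕ}

lemma mem_WtildeG {g : AffPair (2*m+1)} :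
    g ∈ WtildeG m ↔ (∀ j : Fin (2*m+1), g.v j + g.v j.rev = 2 * g.v (midIdx m)) ∧
      IsStarPerm g.p := Iff.rfl

lemma mem_WtildeGSp {g : AffPair (2*m)} :
    g ∈ WtildeGSp m ↔ (∀ j l : Fin (2*m), g.v j + g.v j.rev = g.v l + g.v l.rev) ∧
      IsStarPerm g.p := Iff.rfl

lemma pmid (g : WtildeG m) : (g : AffPair (2*m+1)).p (midIdx m) = midIdx m :=
  starPerm_fixes_mid (mem_WtildeG.mp g.2).2

lemma rev_ne_mid {j : Fin (2*m+1)} (hj : j ≠ midIdx m) : j.rev ≠ midIdx m := by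
  intro h
  apply hj
  have := congrArg Fin.rev h
  rwa [Fin.rev_rev, rev_midIdx] at this

lemma deIota_rev (hm : 0 < m) {j : Fin (2*m+1)} (hj : j ≠ midIdx m) :
    deIota hm j.rev = (deIota hm j).rev := by
  apply iotaIdx_injective
  rw [iota_deIota hm (rev_ne_mid hj), iotaIdx_rev, iota_deIota hm hj]

lemma liftPerm_mid (hm : 0 < m) (τ : Equiv.Perm (Fin (2*m))) :
    liftPerm hm τ (midIdx m) = midIdx m := if_pos rfl

lemma liftPerm_ne (hm : 0 < m) (τ : Equiv.Perm (Fin (2*m))) {j : Fin (2*m+1)}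
    (hj : j ≠ midIdx m) : liftPerm hm τ j = iotaIdx m (τ (deIota hm j)) := if_neg hj

/-- The affine pair underlying the image of `g` under the embedding. -/
def fAff (hm : 0 < m) (g : WtildeG m) : AffPair (2*m) :=
  ⟨fun t => (g : AffPair (2*m+1)).v (iotaIdx m t),
   restrictPerm hm (g : AffPair (2*m+1)).p (pmid g)⟩

lemma fAff_v (hm : 0 < m) (g : WtildeG m) (t : Fin (2*m)) :
    (fAff hm g).v t = (g : AffPair (2*m+1)).v (iotaIdx m t) := rfl

lemma iota_fAffp (hm : 0 < m) (g : WtildeG m) (t : Fin (2*m)) :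
    iotaIdx m ((fAff hm g).p t) = (g : AffPair (2*m+1)).p (iotaIdx m t) :=
  iota_restrict hm _ (pmid g) t

lemma iota_fAffp_inv (hm : 0 < m) (g : WtildeG m) (t : Fin (2*m)) :
    iotaIdx m ((fAff hm g).p⁻¹ t) = (g : AffPair (2*m+1)).p⁻¹ (iotaIdx m t) :=
  iota_restrict_inv hm _ (pmid g) t

lemma fAff_mem (hm : 0 < m) (g : WtildeG m) : fAff hm g ∈ WtildeGSp m := by
  obtain ⟨hv, hp⟩ := mem_WtildeG.mp g.2
  constructor
  · intro j l
    show (g : AffPair (2*m+1)).v (iotaIdx m j) + (g : AffPair (2*m+1)).v (iotaIdx m j.rev)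
      = (g : AffPair (2*m+1)).v (iotaIdx m l) + (g : AffPair (2*m+1)).v (iotaIdx m l.rev)
    rw [iotaIdx_rev, iotaIdx_rev, hv (iotaIdx m j), hv (iotaIdx m l)]
  · intro t
    apply iotaIdx_injective
    rw [iota_fAffp, iotaIdx_rev, hp, iotaIdx_rev, iota_fAffp]

/-- The embedding `W̃_G → W̃_{GSp}`. -/
def fHom (hm : 0 < m) : WtildeG m →* WtildeGSp m :=
  MonoidHom.mk' (fun g => ⟨fAff hm g, fAff_mem hm g⟩) (by
    intro g h
    apply Subtype.ext
    refine AffPair.ext ?_ ?_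
    · funext t
      show ((g : AffPair (2*m+1)) * (h : AffPair (2*m+1))).v (iotaIdx m t)
        = ((fAff hm g) * (fAff hm h)).v t
      rw [AffPair.mul_v, AffPair.mul_v]
      simp only [Pi.add_apply]
      rw [fAff_v, fAff_v, iota_fAffp_inv]
    · apply Equiv.ext
      intro t
      apply iotaIdx_injective
      show iotaIdx m ((fAff hm (g*h)).p t) = iotaIdx m (((fAff hm g).p * (fAff hm h).p) t)
      rw [iota_fAffp, Equiv.Perm.mul_apply, iota_fAffp, iota_fAffp]
      rfl)

lemma fHom_injective (hm : 0 < m) : Function.Injective (fHom hm) := by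
  intro g g' hgg
  have hA : fAff hm g = fAff hm g' := congrArg Subtype.val hgg
  obtain ⟨hv, hp⟩ := mem_WtildeG.mp g.2
  obtain ⟨hv', hp'⟩ := mem_WtildeG.mp g'.2
  have hVe : ∀ t : Fin (2*m),
      (g : AffPair (2*m+1)).v (iotaIdx m t) = (g' : AffPair (2*m+1)).v (iotaIdx m t) :=
    fun t => congrFun (congrArg AffPair.v hA) t
  have hPe : ∀ t : Fin (2*m),
      (g : AffPair (2*m+1)).p (iotaIdx m t) = (g' : AffPair (2*m+1)).p (iotaIdx m t) := by
    intro t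
    rw [← iota_fAffp hm g t, ← iota_fAffp hm g' t, hA]
  have hmidv : (g : AffPair (2*m+1)).v (midIdx m) = (g' : AffPair (2*m+1)).v (midIdx m) := by
    set t0 : Fin (2*m) := ⟨0, by omega⟩ with ht0
    have h1 := hv (iotaIdx m t0)
    have h2 := hv' (iotaIdx m t0)
    rw [← iotaIdx_rev] at h1 h2
    rw [hVe t0, hVe t0.rev] at h1
    omega
  apply Subtype.ext
  refine AffPair.ext ?_ ?_
  · funext j
    by_cases hj : j = midIdx m
    · rw [hj]; exact hmidv
    · rw [← iota_deIota hm hj]; exact hVe _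
  · apply Equiv.ext
    intro j
    by_cases hj : j = midIdx m
    · rw [hj, pmid g, pmid g']
    · rw [← iota_deIota hm hj]; exact hPe _

/-- The index-zero element of `Fin (2*m)`. -/
def j0 (hm : 0 < m) : Fin (2*m) := ⟨0, by omega⟩

/-- The common value `y_1 + y_{2m}` of an element of `W̃_{GSp}`. -/
def parityAux (hm : 0 < m) (g : WtildeGSp m) : ℤ :=
  (g : AffPair (2*m)).v (j0 hm) + (g : AffPair (2*m)).v (j0 hm).rev

lemma parityAux_mul (hm : 0 < m) (g h : WtildeGSp m) :
    parityAux hm (g * h) = parityAux hm g + parityAux hm h := by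
  obtain ⟨_, hgp⟩ := mem_WtildeGSp.mp g.2
  obtain ⟨hhv, _⟩ := mem_WtildeGSp.mp h.2
  show ((g : AffPair (2*m)) * (h : AffPair (2*m))).v (j0 hm)
    + ((g : AffPair (2*m)) * (h : AffPair (2*m))).v (j0 hm).rev = _
  rw [AffPair.mul_v]
  simp only [Pi.add_apply]
  rw [isStarPerm_inv hgp (j0 hm)]
  have h2 := hhv ((g : AffPair (2*m)).p⁻¹ (j0 hm)) (j0 hm)
  show _ = ((g : AffPair (2*m)).v (j0 hm) + (g : AffPair (2*m)).v (j0 hm).rev)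
    + ((h : AffPair (2*m)).v (j0 hm) + (h : AffPair (2*m)).v (j0 hm).rev)
  omega

/-- The parity homomorphism `W̃_{GSp} → ℤ/2` reading off the common value mod 2. -/
def parity (hm : 0 < m) : WtildeGSp m →* Multiplicative (ZMod 2) :=
  MonoidHom.mk' (fun g => Multiplicative.ofAdd ((parityAux hm g : ZMod 2))) (by
    intro g h
    beta_reduce
    rw [← ofAdd_add]
    congr 1
    rw [parityAux_mul]
    push_cast
    ring)

lemma parity_apply (hm : 0 < m) (g : WtildeGSp m) :
    parity hm g = Multiplicative.ofAdd ((parityAux hm g : ZMod 2)) := rfl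

/-- A translation with odd common value. -/
def tau0 (hm : 0 < m) : WtildeGSp m :=
  ⟨⟨fun t => if (t : ℕ) < m then 1 else 0, 1⟩, by
    constructor
    · intro j l
      have hj := j.isLt
      have hl := l.isLt
      show (if (j : ℕ) < m then (1:ℤ) else 0) + (if ((j.rev : Fin (2*m)) : ℕ) < m then 1 else 0)
        = (if (l : ℕ) < m then (1:ℤ) else 0) + (if ((l.rev : Fin (2*m)) : ℕ) < m then 1 else 0)
      simp only [Fin.val_rev]
      split_ifs <;> omega
    · intro t
      rfl⟩

lemma parityAux_tau0 (hm : 0 < m) : parityAux hm (tau0 hm) = 1 := by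
  have h1 : ((tau0 hm : AffPair (2*m)).v (j0 hm)) = 1 := by
    show (if ((j0 hm : Fin (2*m)) : ℕ) < m then (1:ℤ) else 0) = 1
    exact if_pos hm
  have h2 : ((tau0 hm : AffPair (2*m)).v (j0 hm).rev) = 0 := by
    show (if (((j0 hm).rev : Fin (2*m)) : ℕ) < m then (1:ℤ) else 0) = 0
    rw [Fin.val_rev]
    apply if_neg
    show ¬ (2*m - (((j0 hm : Fin (2*m)) : ℕ)+1) < m)
    show ¬ (2*m - (0+1) < m)
    omega
  show (tau0 hm : AffPair (2*m)).v (j0 hm) + (tau0 hm : AffPair (2*m)).v (j0 hm).rev = 1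
  rw [h1, h2]
  norm_num

lemma parity_surjective (hm : 0 < m) : Function.Surjective (parity hm) := by
  intro x
  have hx : ∀ a : ZMod 2, a = 0 ∨ a = 1 := by decide
  rcases hx x.toAdd with h | h
  · refine ⟨1, ?_⟩
    rw [map_one, show x = Multiplicative.ofAdd x.toAdd from rfl, h]
    rfl
  · refine ⟨tau0 hm, ?_⟩
    rw [show x = Multiplicative.ofAdd x.toAdd from rfl, h, parity_apply, parityAux_tau0]
    norm_num

lemma range_eq_ker (hm : 0 < m) : (fHom hm).range = (parity hm).ker := by
  ext h
  constructor
  · rintro ⟨g, rfl⟩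
    obtain ⟨hv, hp⟩ := mem_WtildeG.mp g.2
    rw [MonoidHom.mem_ker, parity_apply]
    have key : parityAux hm (fHom hm g) = 2 * (g : AffPair (2*m+1)).v (midIdx m) := by
      show (g : AffPair (2*m+1)).v (iotaIdx m (j0 hm))
        + (g : AffPair (2*m+1)).v (iotaIdx m (j0 hm).rev) = _
      rw [iotaIdx_rev]
      exact hv _
    rw [key]
    have hc : ((2 * (g : AffPair (2*m+1)).v (midIdx m) : ℤ) : ZMod 2) = 0 := by
      push_cast
      rw [show ((2:ZMod 2)) = 0 by decide]
      ring
    rw [hc]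
    rfl
  · intro hker
    obtain ⟨hhv, hhp⟩ := mem_WtildeGSp.mp h.2
    have h0 : ((parityAux hm h : ℤ) : ZMod 2) = 0 := by
      rw [MonoidHom.mem_ker, parity_apply] at hker
      exact congrArg Multiplicative.toAdd hker
    rw [ZMod.intCast_zmod_eq_zero_iff_dvd] at h0
    obtain ⟨c, hc⟩ := h0
    have hc' : (h : AffPair (2*m)).v (j0 hm) + (h : AffPair (2*m)).v (j0 hm).rev = 2 * c := by
      have : parityAux hm h = (2:ℕ) * c := hc
      simpa [parityAux] using this
    set gl : AffPair (2*m+1) :=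
      ⟨fun j => if j = midIdx m then c else (h : AffPair (2*m)).v (deIota hm j),
       liftPerm hm (h : AffPair (2*m)).p⟩ with hgl
    have hglmid : gl.v (midIdx m) = c := if_pos rfl
    have hmem : gl ∈ WtildeG m := by
      constructor
      · intro j
        rw [hglmid]
        by_cases hj : j = midIdx m
        · rw [hj, rev_midIdx]
          show (if midIdx m = midIdx m then c else _) + (if midIdx m = midIdx m then c else _)
            = 2*c
          rw [if_pos rfl]
          ring
        · show (if j = midIdx m then c else (h : AffPair (2*m)).v (deIota hm j))
            + (if j.rev = midIdx m then c else (h : AffPair (2*m)).v (deIota hm j.rev)) = 2*c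
          rw [if_neg hj, if_neg (rev_ne_mid hj), deIota_rev hm hj,
            hhv (deIota hm j) (j0 hm)]
          omega
      · intro j
        by_cases hj : j = midIdx m
        · show liftPerm hm (h : AffPair (2*m)).p j.rev = (liftPerm hm (h : AffPair (2*m)).p j).rev
          rw [hj, rev_midIdx, liftPerm_mid, rev_midIdx]
        · show liftPerm hm (h : AffPair (2*m)).p j.rev = (liftPerm hm (h : AffPair (2*m)).p j).rev
          rw [liftPerm_ne hm _ (rev_ne_mid hj), liftPerm_ne hm _ hj, deIota_rev hm hj,
            hhp (deIota hm j), iotaIdx_rev]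
    refine ⟨⟨gl, hmem⟩, ?_⟩
    apply Subtype.ext
    refine AffPair.ext ?_ ?_
    · funext t
      show gl.v (iotaIdx m t) = (h : AffPair (2*m)).v t
      show (if iotaIdx m t = midIdx m then c
          else (h : AffPair (2*m)).v (deIota hm (iotaIdx m t))) = _
      rw [if_neg (iota_ne_mid t), deIota_iota]
    · apply Equiv.ext
      intro t
      apply iotaIdx_injective
      show iotaIdx m ((fAff hm ⟨gl, hmem⟩).p t) = iotaIdx m ((h : AffPair (2*m)).p t)
      rw [iota_fAffp]
      show liftPerm hm (h : AffPair (2*m)).p (iotaIdx m t) = _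
      rw [liftPerm_ne hm _ (iota_ne_mid t), deIota_iota]

end Main


/-- The map deleting the middle coordinate on translation parts, together
with the natural isomorphism S_n^* ≅ S_{2m}^* (restriction along `iotaIdx`), defines an
injective group homomorphism W̃_G → W̃_{GSp} whose image has index 2 (n = 2m+1). -/
theorem stmt_19 (m : ℕ) (hm : 0 < m) :
    ∃ f : WtildeG m →* WtildeGSp m,
      Function.Injective f ∧
      (∀ g : WtildeG m, ∀ t : Fin (2*m),
        ((f g : AffPair (2*m)).v t = (g : AffPair (2*m+1)).v (iotaIdx m t)) ∧
        (iotaIdx m ((f g : AffPair (2*m)).p t) = (g : AffPair (2*m+1)).p (iotaIdx m t))) ∧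
      f.range.index = 2 := by
  refine ⟨fHom hm, fHom_injective hm, ?_, ?_⟩
  · intro g t
    exact ⟨rfl, iota_fAffp hm g t⟩
  · rw [range_eq_ker hm, Subgroup.index_ker]
    have h1 : (parity hm).range = ⊤ :=
      MonoidHom.range_eq_top_of_surjective _ (parity_surjective hm)
    rw [h1, Subgroup.card_top, Nat.card_eq_fintype_card]
    rfl
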